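/- For every deterministic DSIC and IR mechanism in the two-bidder two-item online setting that achieves a finite approximation factor, for every w ∈ ℝ₊² with w₁ > 0, the item-2 threshold satisfies π₂(w) < ∞. -/

import Mathlib

open scoped ENNReal

noncomputable section

/-- Nonnegative orthant of ℝ² (valid type space of a bidder). -/
def Nn (p : ℝ × ℝ) : Prop := 0 ≤ p.1 ∧ 0 ≤ p.2

/-- A deterministic mechanism for two unit-demand bidders `V`, `W` and two items.
`xV1 v w` is the (scenario-independent) allocation of item 1 to `V`, `xV2 v w`
the allocation of item 2 to `V` in the scenario where both items arrive;
`pV1` is `V`'s payment in the only-item-1 scenario and `pV2` in the both-items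
scenario; similarly for `W`. -/
structure Mechanism where
  xV1 : ℝ × ℝ → ℝ × ℝ → Bool
  xV2 : ℝ × ℝ → ℝ × ℝ → Bool
  xW1 : ℝ × ℝ → ℝ × ℝ → Bool
  xW2 : ℝ × ℝ → ℝ × ℝ → Bool
  pV1 : ℝ × ℝ → ℝ × ℝ → ℝ
  pV2 : ℝ × ℝ → ℝ × ℝ → ℝ
  pW1 : ℝ × ℝ → ℝ × ℝ → ℝ
  pW2 : ℝ × ℝ → ℝ × ℝ → ℝ
  feas1 : ∀ v w, ¬(xV1 v w = true ∧ xW1 v w = true)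
  feas2 : ∀ v w, ¬(xV2 v w = true ∧ xW2 v w = true)

/-- Unit-demand value of a bidder with type `t` for the set of items indicated by `a1, a2`. -/
def setVal (t : ℝ × ℝ) (a1 a2 : Bool) : ℝ :=
  if a1 then (if a2 then max t.1 t.2 else t.1) else (if a2 then t.2 else 0)

/-- Utility of `V` with true type `t`, report `r`, opponent report `w`, when only item 1 arrives. -/
def uV1 (m : Mechanism) (t r w : ℝ × ℝ) : ℝ := (if m.xV1 r w then t.1 else 0) - m.pV1 r w

/-- Utility of `V` with true type `t`, report `r`, opponent report `w`, when both items arrive. -/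
def uV2 (m : Mechanism) (t r w : ℝ × ℝ) : ℝ := setVal t (m.xV1 r w) (m.xV2 r w) - m.pV2 r w

def uW1 (m : Mechanism) (v t r : ℝ × ℝ) : ℝ := (if m.xW1 v r then t.1 else 0) - m.pW1 v r

def uW2 (m : Mechanism) (v t r : ℝ × ℝ) : ℝ := setVal t (m.xW1 v r) (m.xW2 v r) - m.pW2 v r

/-- Dominant-strategy incentive compatibility in every arrival scenario. -/
def DSIC (m : Mechanism) : Prop :=
  (∀ t r w, Nn t → Nn r → Nn w → uV1 m t r w ≤ uV1 m t t w) ∧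
  (∀ t r w, Nn t → Nn r → Nn w → uV2 m t r w ≤ uV2 m t t w) ∧
  (∀ v t r, Nn v → Nn t → Nn r → uW1 m v t r ≤ uW1 m v t t) ∧
  (∀ v t r, Nn v → Nn t → Nn r → uW2 m v t r ≤ uW2 m v t t)

/-- Individual rationality: truthful reporting gives nonnegative utility in every scenario. -/
def IR (m : Mechanism) : Prop :=
  ∀ v w, Nn v → Nn w →
    0 ≤ uV1 m v v w ∧ 0 ≤ uV2 m v v w ∧ 0 ≤ uW1 m v w w ∧ 0 ≤ uW2 m v w w

/-- Welfare of the mechanism's allocation when only item 1 arrives. -/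
def welfare1 (m : Mechanism) (v w : ℝ × ℝ) : ℝ :=
  (if m.xV1 v w then v.1 else 0) + (if m.xW1 v w then w.1 else 0)

/-- Welfare of the mechanism's allocation when both items arrive. -/
def welfare2 (m : Mechanism) (v w : ℝ × ℝ) : ℝ :=
  setVal v (m.xV1 v w) (m.xV2 v w) + setVal w (m.xW1 v w) (m.xW2 v w)

/-- Optimal welfare when only item 1 arrives. -/
def opt1 (v w : ℝ × ℝ) : ℝ := max v.1 w.1

/-- Optimal (max-weight matching) welfare when both items arrive. -/
def opt2 (v w : ℝ × ℝ) : ℝ := max (v.1 + w.2) (v.2 + w.1)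

/-- The mechanism achieves approximation factor `H` to the optimal social welfare,
in every arrival scenario and for all reports. -/
def ApproxH (m : Mechanism) (H : ℝ) : Prop :=
  ∀ v w, Nn v → Nn w → opt1 v w ≤ H * welfare1 m v w ∧ opt2 v w ≤ H * welfare2 m v w

/-- `π ∈ [0,∞]` is a threshold for allocating item 1 to `V` against report `w`. -/
def IsThresh1 (m : Mechanism) (w : ℝ × ℝ) (π : ℝ≥0∞) : Prop :=
  ∀ v, Nn v →
    (π < ENNReal.ofReal v.1 → m.xV1 v w = true) ∧
    (ENNReal.ofReal v.1 < π → m.xV1 v w = false)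

/-- `π₂ ∈ [0,∞]` is a threshold (with threshold payment) for allocating item 2 to `V`
against `w`, conditional on `V` losing item 1 (`v₁ < π₁`). -/
def IsThresh2 (m : Mechanism) (w : ℝ × ℝ) (π₁ π₂ : ℝ≥0∞) : Prop :=
  ∀ v, Nn v → ENNReal.ofReal v.1 < π₁ →
    (π₂ < ENNReal.ofReal v.2 → m.xV2 v w = true ∧ m.pV2 v w = π₂.toReal) ∧
    (ENNReal.ofReal v.2 < π₂ → m.xV2 v w = false ∧ m.pV2 v w = 0)

/-- a DSIC + IR mechanism with a finite approximation factor has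
`π₂(w) < ∞` for every `w` with `w₁ > 0`. -/
theorem pi2_finite (m : Mechanism) (hD : DSIC m) (hIR : IR m)
    (H : ℝ) (hH : 1 ≤ H) (hA : ApproxH m H)
    (π₁ π₂ : ℝ × ℝ → ℝ≥0∞)
    (hπ₁ : ∀ w, Nn w → IsThresh1 m w (π₁ w))
    (hπ₂ : ∀ w, Nn w → 0 < w.1 → IsThresh2 m w (π₁ w) (π₂ w)) :
    ∀ w, Nn w → 0 < w.1 → π₂ w < ⊤ := by
  intro w hw hw1
  -- First: π₁ w > 0
  have hπ₁pos : 0 < π₁ w := by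
    by_contra h
    have hz : π₁ w = 0 := by simpa using h
    set v : ℝ × ℝ := (w.1 / (2 * H), 0) with hv
    have hHpos : (0:ℝ) < H := lt_of_lt_of_le one_pos hH
    have hv1pos : 0 < v.1 := by
      simp only [hv]
      positivity
    have hvNn : Nn v := ⟨le_of_lt hv1pos, le_refl 0⟩
    have hx : m.xV1 v w = true := by
      refine ((hπ₁ w hw v hvNn).1 ?_)
      rw [hz]
      simpa using hv1pos
    have hxW : m.xW1 v w = false := by
      by_contra hW
      exact m.feas1 v w ⟨hx, by simpa using hW⟩
    have hwelf : welfare1 m v w = v.1 := by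
      simp [welfare1, hx, hxW]
    have happ := (hA v w hvNn hw).1
    rw [hwelf] at happ
    have hopt : w.1 ≤ opt1 v w := le_max_right _ _
    have hv1 : H * v.1 = w.1 / 2 := by
      rw [hv]
      field_simp
    have : w.1 ≤ w.1 / 2 := by
      calc w.1 ≤ opt1 v w := hopt
        _ ≤ H * v.1 := happ
        _ = w.1 / 2 := hv1
    linarith
  -- Now suppose π₂ w = ⊤
  by_contra h
  have htop : π₂ w = ⊤ := by simpa using h
  set M : ℝ := max w.1 w.2 with hM
  have hMnn : 0 ≤ M := le_trans hw.1 (le_max_left _ _)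
  have hHpos : (0:ℝ) < H := lt_of_lt_of_le one_pos hH
  set v : ℝ × ℝ := (0, H * M + 1) with hv
  have hv2nn : (0:ℝ) ≤ H * M + 1 := by positivity
  have hvNn : Nn v := ⟨le_refl 0, hv2nn⟩
  have hv1lt : ENNReal.ofReal v.1 < π₁ w := by
    simpa [hv] using hπ₁pos
  have hx1 : m.xV1 v w = false := (hπ₁ w hw v hvNn).2 hv1lt
  have hx2 : m.xV2 v w = false := by
    have := (hπ₂ w hw hw1 v hvNn hv1lt).2 (by rw [htop]; exact ENNReal.ofReal_lt_top)
    exact this.1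
  have hsvw : setVal w (m.xW1 v w) (m.xW2 v w) ≤ M := by
    unfold setVal
    have h1 : w.1 ≤ M := le_max_left _ _
    have h2 : w.2 ≤ M := le_max_right _ _
    split <;> split <;> simp_all [max_le_iff]
  have hwelf : welfare2 m v w ≤ M := by
    unfold welfare2
    rw [hx1, hx2]
    simpa [setVal] using hsvw
  have happ := (hA v w hvNn hw).2
  have hopt : H * M + 1 ≤ opt2 v w := by
    have : v.2 + w.1 ≤ opt2 v w := le_max_right _ _
    have : H * M + 1 + w.1 ≤ opt2 v w := by simpa [hv] using this
    linarith [hw.1]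
  have : H * M + 1 ≤ H * M := by
    calc H * M + 1 ≤ opt2 v w := hopt
      _ ≤ H * welfare2 m v w := happ
      _ ≤ H * M := by nlinarith
  linarith
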